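/- Let K ≥ 1 and let f = h + conj∘g be an injective, sense-preserving, K-quasiconformal harmonic mapping on 𝔻 with Ω = f(𝔻) ≠ ℂ. Then for every z ∈ 𝔻, |h'(z)| + |g'(z)| ≥ ((1+K)/(2K))·d_Ω(f(z))/(1−|z|²). -/

import Mathlib

open Complex Metric Set Filter Topology

noncomputable section

lemma conj_mul_self' (z : ℂ) : (starRingEnd ℂ) z * z = (Complex.normSq z : ℂ) := by
  rw [mul_comm]; exact Complex.mul_conj z

lemma analytic_hasStrictDerivAt {F : ℂ → ℂ} {s : Set ℂ} (hF : AnalyticOnNhd ℂ F s) {z : ℂ}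
    (hz : z ∈ s) : HasStrictDerivAt F (deriv F z) z := by
  obtain ⟨p, hp⟩ := hF z hz
  simpa [hp.deriv] using hp.hasStrictDerivAt




/-- The real-linear map `v ↦ a*v + conj (b*v)` as a linear equivalence when `|b| < |a|`. -/
def hqLinEquiv (a b : ℂ) (hab : Complex.normSq b < Complex.normSq a) : ℂ ≃ₗ[ℝ] ℂ where
  toFun v := a * v + (starRingEnd ℂ) (b * v)
  invFun u := ((Complex.normSq a - Complex.normSq b : ℝ) : ℂ)⁻¹ *
    ((starRingEnd ℂ) a * u - (starRingEnd ℂ) b * (starRingEnd ℂ) u)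
  map_add' := by
    intro x y; simp only [mul_add, map_add]; ring
  map_smul' := by
    intro r x
    simp only [Complex.real_smul, map_mul, Complex.conj_ofReal, RingHom.id_apply]
    ring
  left_inv := by
    intro v
    dsimp only
    have hJ : ((Complex.normSq a - Complex.normSq b : ℝ) : ℂ) ≠ 0 := by
      simp only [ne_eq, Complex.ofReal_eq_zero]; nlinarith
    have expand : (starRingEnd ℂ) a * (a * v + (starRingEnd ℂ) (b * v)) -
        (starRingEnd ℂ) b * (starRingEnd ℂ) (a * v + (starRingEnd ℂ) (b * v)) =
        ((Complex.normSq a - Complex.normSq b : ℝ) : ℂ) * v := by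
      simp only [map_add, map_mul, Complex.conj_conj, Complex.ofReal_sub]
      linear_combination (v : ℂ) * conj_mul_self' a - v * conj_mul_self' b
    rw [expand, inv_mul_cancel_left₀ hJ]
  right_inv := by
    intro u
    dsimp only
    have hJ : ((Complex.normSq a - Complex.normSq b : ℝ) : ℂ) ≠ 0 := by
      simp only [ne_eq, Complex.ofReal_eq_zero]; nlinarith
    set J : ℂ := ((Complex.normSq a - Complex.normSq b : ℝ) : ℂ) with hJdef
    set A : ℂ := (starRingEnd ℂ) a * u - (starRingEnd ℂ) b * (starRingEnd ℂ) u with hA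
    have hJr : (starRingEnd ℂ) J = J := by
      simp [hJdef, Complex.conj_ofReal]
    have h1 : (starRingEnd ℂ) (b * (J⁻¹ * A)) = J⁻¹ * (starRingEnd ℂ) (b * A) := by
      simp only [map_mul, map_inv₀, hJr]; ring
    have h2 : a * (J⁻¹ * A) = J⁻¹ * (a * A) := by ring
    rw [h1, h2, ← mul_add]
    have key : a * A + (starRingEnd ℂ) (b * A) = J * u := by
      simp only [hA, map_mul, map_sub, Complex.conj_conj, hJdef, Complex.ofReal_sub]
      linear_combination u * conj_mul_self' a - u * conj_mul_self' b
    rw [key, inv_mul_cancel_left₀ hJ]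

@[simp] lemma hqLinEquiv_apply (a b : ℂ) (hab : Complex.normSq b < Complex.normSq a) (v : ℂ) :
    hqLinEquiv a b hab v = a * v + (starRingEnd ℂ) (b * v) := rfl

@[simp] lemma hqLinEquiv_symm_apply (a b : ℂ) (hab : Complex.normSq b < Complex.normSq a) (u : ℂ) :
    (hqLinEquiv a b hab).symm u = ((Complex.normSq a - Complex.normSq b : ℝ) : ℂ)⁻¹ *
      ((starRingEnd ℂ) a * u - (starRingEnd ℂ) b * (starRingEnd ℂ) u) := rfl

/-- As a continuous linear equivalence over ℝ. -/
def hqCLE (a b : ℂ) (hab : Complex.normSq b < Complex.normSq a) : ℂ ≃L[ℝ] ℂ :=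
  (hqLinEquiv a b hab).toContinuousLinearEquiv

@[simp] lemma hqCLE_apply (a b : ℂ) (hab : Complex.normSq b < Complex.normSq a) (v : ℂ) :
    hqCLE a b hab v = a * v + (starRingEnd ℂ) (b * v) := rfl

@[simp] lemma hqCLE_symm_apply (a b : ℂ) (hab : Complex.normSq b < Complex.normSq a) (u : ℂ) :
    (hqCLE a b hab).symm u = ((Complex.normSq a - Complex.normSq b : ℝ) : ℂ)⁻¹ *
      ((starRingEnd ℂ) a * u - (starRingEnd ℂ) b * (starRingEnd ℂ) u) := rfl


section deriv

lemma hasStrictFDerivAt_addconj (h g : ℂ → ℂ) {z a b : ℂ}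
    (hh : HasStrictDerivAt h a z) (hg : HasStrictDerivAt g b z)
    (hab : Complex.normSq b < Complex.normSq a) :
    HasStrictFDerivAt (fun w => h w + (starRingEnd ℂ) (g w))
      ((hqCLE a b hab : ℂ →L[ℝ] ℂ)) z := by
  have H1 : HasStrictFDerivAt h ((ContinuousLinearMap.smulRight (1 : ℂ →L[ℂ] ℂ) a).restrictScalars ℝ) z :=
    hh.restrictScalars ℝ
  have Hc : HasStrictFDerivAt (fun w => (starRingEnd ℂ) (g w))
      ((Complex.conjCLE : ℂ →L[ℝ] ℂ).comp
        ((ContinuousLinearMap.smulRight (1 : ℂ →L[ℂ] ℂ) b).restrictScalars ℝ)) z := by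
    exact (Complex.conjCLE.toContinuousLinearMap.hasStrictFDerivAt).comp z (hg.restrictScalars ℝ)
  have := H1.add Hc
  refine HasStrictFDerivAt.congr_fderiv this ?_
  ext v
  simp [hqCLE, Complex.conjCLE]
  ring

end deriv




/-- Drift estimate: the key pointwise inequality. -/
lemma drift_ineq (k : ℝ) (hk0 : 0 ≤ k) (hk1 : k < 1) (a b e : ℂ) (ha : a ≠ 0)
    (hab : ‖b‖ ≤ k * ‖a‖) :
    (‖e‖) ^ 2 / (1 + k) ≤
      ((starRingEnd ℂ) e * (((Complex.normSq a - Complex.normSq b : ℝ) : ℂ)⁻¹ *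
        ((starRingEnd ℂ) a * e - (starRingEnd ℂ) b * (starRingEnd ℂ) e) * a)).re := by
  set α := ‖a‖ with hα
  set β := ‖b‖ with hβ
  have hα0 : 0 < α := by rw [hα]; exact (norm_pos_iff.mpr ha)
  have hβα : β < α := lt_of_le_of_lt hab (by nlinarith)
  have hβ0 : 0 ≤ β := norm_nonneg b
  have h1 := conj_mul_self' a
  have h2 := conj_mul_self' e
  have e1 : ((starRingEnd ℂ) e * (((Complex.normSq a - Complex.normSq b : ℝ) : ℂ)⁻¹ *
        ((starRingEnd ℂ) a * e - (starRingEnd ℂ) b * (starRingEnd ℂ) e) * a)) =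
      (((Complex.normSq a - Complex.normSq b)⁻¹ : ℝ) : ℂ) *
        (((Complex.normSq a * Complex.normSq e : ℝ) : ℂ)
          - a * (starRingEnd ℂ) b * ((starRingEnd ℂ) e) ^ 2) := by
    rw [Complex.ofReal_inv]
    push_cast
    linear_combination (((Complex.normSq a : ℝ) : ℂ) - ((Complex.normSq b : ℝ) : ℂ))⁻¹ *
      (((starRingEnd ℂ) e * e) * h1 + ((Complex.normSq a : ℝ) : ℂ) * h2)
  rw [e1, Complex.re_ofReal_mul]
  have hTre : ((((Complex.normSq a * Complex.normSq e : ℝ)) : ℂ)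
      - a * (starRingEnd ℂ) b * ((starRingEnd ℂ) e) ^ 2).re
      = Complex.normSq a * Complex.normSq e
        - (a * (starRingEnd ℂ) b * ((starRingEnd ℂ) e) ^ 2).re := by
    simp [Complex.sub_re]
  rw [hTre]
  have hre : (a * (starRingEnd ℂ) b * ((starRingEnd ℂ) e) ^ 2).re ≤ α * β * ‖e‖ ^ 2 := by
    refine le_trans (Complex.re_le_norm _) (le_of_eq ?_)
    rw [norm_mul, norm_mul, norm_pow, Complex.norm_conj, Complex.norm_conj]
  set T := (a * (starRingEnd ℂ) b * ((starRingEnd ℂ) e) ^ 2).re with hT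
  have hnsa : Complex.normSq a = α ^ 2 := by rw [Complex.normSq_eq_norm_sq, hα]
  have hnsb : Complex.normSq b = β ^ 2 := by rw [Complex.normSq_eq_norm_sq, hβ]
  have hnse : Complex.normSq e = ‖e‖ ^ 2 := Complex.normSq_eq_norm_sq e
  rw [hnsa, hnsb, hnse]
  set E := ‖e‖ ^ 2 with hE
  have hE0 : 0 ≤ E := by rw [hE]; positivity
  have hJ : (0:ℝ) < α ^ 2 - β ^ 2 := by nlinarith
  have hk1' : (0:ℝ) < 1 + k := by positivity
  have hmono : (α^2-β^2)⁻¹ * (α^2*E - α*β*E) ≤ (α^2-β^2)⁻¹ * (α^2*E - T) := by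
    apply mul_le_mul_of_nonneg_left (by linarith [hre]) (by positivity)
  refine le_trans ?_ hmono
  rw [inv_mul_eq_div, div_le_div_iff₀ hk1' hJ]
  nlinarith [mul_nonneg hE0 (sub_nonneg.2 hab), mul_nonneg hE0 (mul_nonneg hα0.le hβ0),
    mul_nonneg (mul_nonneg hE0 hα0.le) (sub_nonneg.2 (le_of_lt hβα))]





lemma normSq_mobius_identity (z₀ z : ℂ) :
    Complex.normSq (1 - (starRingEnd ℂ) z₀ * z) - Complex.normSq (z - z₀)
      = (1 - Complex.normSq z₀) * (1 - Complex.normSq z) := by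
  have key : (1 - (starRingEnd ℂ) z₀ * z) * (starRingEnd ℂ) (1 - (starRingEnd ℂ) z₀ * z)
      - (z - z₀) * (starRingEnd ℂ) (z - z₀)
      = (1 - z₀ * (starRingEnd ℂ) z₀) * (1 - z * (starRingEnd ℂ) z) := by
    simp only [map_sub, map_mul, map_one, Complex.conj_conj]
    ring
  rw [Complex.mul_conj, Complex.mul_conj, Complex.mul_conj, Complex.mul_conj] at key
  exact_mod_cast key

lemma mobius_den_ne (z₀ z : ℂ) (h₀ : ‖z₀‖ < 1) (h : ‖z‖ < 1) :
    (1 : ℂ) - (starRingEnd ℂ) z₀ * z ≠ 0 := by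
  intro hc
  have h1 : Complex.normSq (1 - (starRingEnd ℂ) z₀ * z) = 0 := by rw [hc]; simp
  have h2 := normSq_mobius_identity z₀ z
  rw [h1] at h2
  have h3 : Complex.normSq z₀ < 1 := by
    rw [Complex.normSq_eq_norm_sq]; nlinarith [norm_nonneg z₀]
  have h4 : Complex.normSq z < 1 := by
    rw [Complex.normSq_eq_norm_sq]; nlinarith [norm_nonneg z]
  nlinarith [Complex.normSq_nonneg (z - z₀)]

lemma mobius_mem (z₀ z : ℂ) (h₀ : ‖z₀‖ < 1) (h : ‖z‖ < 1) :
    ‖(z - z₀) / (1 - (starRingEnd ℂ) z₀ * z)‖ < 1 := by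
  rw [norm_div, div_lt_one (norm_pos_iff.mpr (mobius_den_ne z₀ z h₀ h))]
  rw [Complex.norm_def, Complex.norm_def]
  apply Real.sqrt_lt_sqrt (Complex.normSq_nonneg _)
  have h2 := normSq_mobius_identity z₀ z
  have h3 : Complex.normSq z₀ < 1 := by
    rw [Complex.normSq_eq_norm_sq]; nlinarith [norm_nonneg z₀]
  have h4 : Complex.normSq z < 1 := by
    rw [Complex.normSq_eq_norm_sq]; nlinarith [norm_nonneg z]
  nlinarith

lemma mobius_hasDerivAt (z₀ : ℂ) (h₀ : ‖z₀‖ < 1) :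
    HasDerivAt (fun z => (z - z₀) / (1 - (starRingEnd ℂ) z₀ * z))
      (((1 - ‖z₀‖ ^ 2 : ℝ) : ℂ))⁻¹ z₀ := by
  have hden : (1 : ℂ) - (starRingEnd ℂ) z₀ * z₀ ≠ 0 := mobius_den_ne z₀ z₀ h₀ h₀
  have h1 : HasDerivAt (fun z : ℂ => z - z₀) 1 z₀ := by
    simpa using (hasDerivAt_id z₀).sub_const z₀
  have h2 : HasDerivAt (fun z : ℂ => (1 : ℂ) - (starRingEnd ℂ) z₀ * z)
      (-(starRingEnd ℂ) z₀) z₀ := by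
    have := ((hasDerivAt_id z₀).const_mul ((starRingEnd ℂ) z₀)).const_sub (1 : ℂ)
    simpa using this
  have hd := h1.div h2 hden
  have hns : (starRingEnd ℂ) z₀ * z₀ = ((‖z₀‖ ^ 2 : ℝ) : ℂ) := by
    rw [conj_mul_self', Complex.normSq_eq_norm_sq]
  have e : (1:ℂ) - (starRingEnd ℂ) z₀ * z₀ = ((1 - ‖z₀‖ ^ 2 : ℝ) : ℂ) := by
    push_cast; rw [hns]; push_cast; ring
  have hne : ((1 - ‖z₀‖ ^ 2 : ℝ) : ℂ) ≠ 0 := by rw [← e]; exact hden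
  refine hd.congr_deriv (Eq.symm ?_)
  rw [show (1 * (1 - (starRingEnd ℂ) z₀ * z₀) - (z₀ - z₀) * -(starRingEnd ℂ) z₀)
      = 1 - (starRingEnd ℂ) z₀ * z₀ from by ring, e]
  rw [eq_div_iff (pow_ne_zero 2 hne)]
  have hne2 : ((1 - ‖z₀‖ * ‖z₀‖ : ℝ) : ℂ) ≠ 0 := by
    rw [show (1 - ‖z₀‖ * ‖z₀‖ : ℝ) = 1 - ‖z₀‖ ^ 2 from by ring]
    exact hne
  field_simp


theorem qc_core (k : ℝ) (hk0 : 0 ≤ k) (hk1 : k < 1) (h g f : ℂ → ℂ)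
    (hh : AnalyticOnNhd ℂ h (Metric.ball (0:ℂ) 1)) (hg : AnalyticOnNhd ℂ g (Metric.ball (0:ℂ) 1))
    (hf : ∀ z, f z = h z + (starRingEnd ℂ) (g z))
    (finj : Set.InjOn f (Metric.ball (0:ℂ) 1))
    (hkb : ∀ z ∈ Metric.ball (0:ℂ) 1, ‖deriv g z‖ ≤ k * ‖deriv h z‖)
    (hpos : ∀ z ∈ Metric.ball (0:ℂ) 1, deriv h z ≠ 0)
    {z₀ : ℂ} (hz₀ : z₀ ∈ Metric.ball (0:ℂ) 1) {d : ℝ} (hd : 0 < d)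
    (hball : Metric.ball (f z₀) d ⊆ f '' Metric.ball (0:ℂ) 1) :
    d ≤ (1 + k) * ((1 - ‖z₀‖ ^ 2) * ‖deriv h z₀‖) := by
  have hk1' : (0:ℝ) < 1 + k := by linarith
  -- basic facts
  have hns : ∀ z ∈ Metric.ball (0:ℂ) 1,
      Complex.normSq (deriv g z) < Complex.normSq (deriv h z) := by
    intro z hz
    rw [Complex.normSq_eq_norm_sq, Complex.normSq_eq_norm_sq]
    have h1 := hkb z hz
    have h2 := norm_pos_iff.mpr (hpos z hz)
    have h3 := norm_nonneg (deriv g z)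
    have h4 : ‖deriv g z‖ < ‖deriv h z‖ := by nlinarith
    nlinarith
  -- strict derivative of f
  have hsf : ∀ z : ℂ, ∀ hz : z ∈ Metric.ball (0:ℂ) 1, HasStrictFDerivAt f
      ((hqCLE (deriv h z) (deriv g z) (hns z hz) : ℂ →L[ℝ] ℂ)) z := by
    intro z hz
    have := hasStrictFDerivAt_addconj h g (analytic_hasStrictDerivAt hh hz)
      (analytic_hasStrictDerivAt hg hz) (hns z hz)
    have hfe : f = fun w => h w + (starRingEnd ℂ) (g w) := funext hf
    rw [hfe]
    exact this
  -- the inverse function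
  set Finv : ℂ → ℂ := Function.invFunOn f (Metric.ball (0:ℂ) 1) with hFinv
  set Ω : Set ℂ := f '' Metric.ball (0:ℂ) 1 with hΩ
  have finv_mem : ∀ w ∈ Ω, Finv w ∈ Metric.ball (0:ℂ) 1 := by
    intro w hw
    obtain ⟨z, hz, rfl⟩ := hw
    exact Function.invFunOn_mem ⟨z, hz, rfl⟩
  have finv_right : ∀ w ∈ Ω, f (Finv w) = w := by
    intro w hw
    obtain ⟨z, hz, rfl⟩ := hw
    exact Function.invFunOn_eq ⟨z, hz, rfl⟩
  have finv_left : ∀ z ∈ Metric.ball (0:ℂ) 1, Finv (f z) = z := by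
    intro z hz
    exact finj (finv_mem (f z) ⟨z, hz, rfl⟩) hz (finv_right (f z) ⟨z, hz, rfl⟩)
  -- the inverse vector field
  set V : ℂ → ℂ → ℂ := fun z E =>
    ((Complex.normSq (deriv h z) - Complex.normSq (deriv g z) : ℝ) : ℂ)⁻¹ *
      ((starRingEnd ℂ) (deriv h z) * E - (starRingEnd ℂ) (deriv g z) * (starRingEnd ℂ) E)
    with hV
  -- local behavior of Finv
  have finv_loc : ∀ w ∈ Ω, ContinuousAt Finv w ∧
      (∀ (w₁ E : ℂ) (s₀ : ℝ), w₁ + s₀ • E = w →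
        HasDerivAt (fun s : ℝ => Finv (w₁ + s • E)) (V (Finv w) E) s₀) := by
    intro w hw
    have ha : Finv w ∈ Metric.ball (0:ℂ) 1 := finv_mem w hw
    have hfa : f (Finv w) = w := finv_right w hw
    set a : ℂ := Finv w with haa
    have hstrict := hsf a ha
    set li : ℂ → ℂ := hstrict.localInverse f _ a with hli
    have E2 : ∀ᶠ y in 𝓝 (f a), f (li y) = y := hstrict.eventually_right_inverse
    have E3 : Tendsto li (𝓝 (f a)) (𝓝 a) := hstrict.localInverse_tendsto
    have E4 : ∀ᶠ y in 𝓝 (f a), li y ∈ Metric.ball (0:ℂ) 1 :=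
      E3.eventually (isOpen_ball.eventually_mem ha)
    have heq : ∀ᶠ y in 𝓝 (f a), Finv y = li y := by
      filter_upwards [E2, E4] with y h2 h4
      have hyΩ : y ∈ Ω := by rw [hΩ]; exact ⟨li y, h4, h2⟩
      exact finj (finv_mem y hyΩ) h4 (by rw [finv_right y hyΩ, h2])
    rw [← hfa]
    constructor
    · exact hstrict.localInverse_continuousAt.congr (heq.mono fun y hy => hy.symm)
    · intro w₁ E s₀ hws
      have hFd : HasFDerivAt Finv
          (((hqCLE (deriv h a) (deriv g a) (hns a ha)).symm : ℂ →L[ℝ] ℂ)) (f a) :=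
        hstrict.to_localInverse.hasFDerivAt.congr_of_eventuallyEq heq
      have hc : HasDerivAt (fun s : ℝ => w₁ + s • E) E s₀ := by
        simpa using ((hasDerivAt_id s₀).smul_const E).const_add w₁
      rw [← hws] at hFd
      have hcomp := hFd.comp_hasDerivAt s₀ hc
      exact hcomp.congr_deriv (hqCLE_symm_apply _ _ _ E)
  -- co-Lipschitz property of h ∘ Finv
  have colip : ∀ w₁ ∈ Metric.ball (f z₀) d, ∀ w₂ ∈ Metric.ball (f z₀) d,
      dist w₁ w₂ ≤ (1 + k) * dist (h (Finv w₁)) (h (Finv w₂)) := by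
    intro w₁ hw₁ w₂ hw₂
    rcases eq_or_ne w₁ w₂ with rfl | hne
    · simp
    set E : ℂ := w₂ - w₁ with hE
    have hE0 : E ≠ 0 := sub_ne_zero.2 (Ne.symm hne)
    have hEabs : 0 < ‖E‖ := norm_pos_iff.mpr hE0
    have seg : ∀ s ∈ Icc (0:ℝ) 1, w₁ + s • E ∈ Metric.ball (f z₀) d := by
      intro s hs
      exact (convex_ball (f z₀) d).add_smul_sub_mem hw₁ hw₂ hs
    set c : ℝ := ‖E‖ ^ 2 / (1 + k) with hc
    set φ : ℝ → ℝ := fun s => ((starRingEnd ℂ) E * h (Finv (w₁ + s • E))).re - s * c with hφ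
    have hφd : ∀ s ∈ Icc (0:ℝ) 1, HasDerivAt φ
        (((starRingEnd ℂ) E * (V (Finv (w₁ + s • E)) E * deriv h (Finv (w₁ + s • E)))).re - c)
        s := by
      intro s hs
      have hwm : w₁ + s • E ∈ Ω := hball (seg s hs)
      have hp : HasDerivAt (fun t : ℝ => Finv (w₁ + t • E)) (V (Finv (w₁ + s • E)) E) s :=
        (finv_loc _ hwm).2 w₁ E s rfl
      have hzb : Finv (w₁ + s • E) ∈ Metric.ball (0:ℂ) 1 := finv_mem _ hwm
      have hhd : HasDerivAt h (deriv h (Finv (w₁ + s • E))) (Finv (w₁ + s • E)) :=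
        (analytic_hasStrictDerivAt hh hzb).hasDerivAt
      have hcomp : HasDerivAt (fun t : ℝ => h (Finv (w₁ + t • E)))
          (V (Finv (w₁ + s • E)) E • deriv h (Finv (w₁ + s • E))) s :=
        HasDerivAt.scomp s hhd hp
      have hmul : HasDerivAt (fun t : ℝ => (starRingEnd ℂ) E * h (Finv (w₁ + t • E)))
          ((starRingEnd ℂ) E * (V (Finv (w₁ + s • E)) E • deriv h (Finv (w₁ + s • E)))) s :=
        hcomp.const_mul _
      have hre := Complex.reCLM.hasFDerivAt.comp_hasDerivAt s hmul
      have hlin : HasDerivAt (fun t : ℝ => t * c) c s := hasDerivAt_mul_const c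
      exact hre.sub hlin
    have hmono : MonotoneOn φ (Icc (0:ℝ) 1) := by
      apply monotoneOn_of_deriv_nonneg (convex_Icc 0 1)
      · exact fun s hs => (hφd s hs).continuousAt.continuousWithinAt
      · intro s hs
        rw [interior_Icc] at hs
        exact ((hφd s (Ioo_subset_Icc_self hs)).differentiableAt).differentiableWithinAt
      · intro s hs
        rw [interior_Icc] at hs
        rw [(hφd s (Ioo_subset_Icc_self hs)).deriv]
        have hzb := finv_mem _ (hball (seg s (Ioo_subset_Icc_self hs)))
        have hdr := drift_ineq k hk0 hk1 (deriv h (Finv (w₁ + s • E)))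
          (deriv g (Finv (w₁ + s • E))) E (hpos _ hzb) (hkb _ hzb)
        rw [hc]
        rw [hV]
        simp only [sub_nonneg]
        calc ‖E‖ ^ 2 / (1 + k) ≤ _ := hdr
        _ = _ := by ring_nf
    have h01 : φ 0 ≤ φ 1 :=
      hmono (left_mem_Icc.2 zero_le_one) (right_mem_Icc.2 zero_le_one) zero_le_one
    have e0 : w₁ + (0:ℝ) • E = w₁ := by simp
    have e1 : w₁ + (1:ℝ) • E = w₂ := by rw [hE]; simp
    rw [hφ] at h01
    simp only [e0, e1, zero_mul, sub_zero, one_mul] at h01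
    have hkey : c ≤ ((starRingEnd ℂ) E * (h (Finv w₂) - h (Finv w₁))).re := by
      rw [mul_sub, Complex.sub_re]; linarith
    have habs : ((starRingEnd ℂ) E * (h (Finv w₂) - h (Finv w₁))).re ≤
        ‖E‖ * ‖h (Finv w₂) - h (Finv w₁)‖ := by
      refine le_trans (Complex.re_le_norm _) ?_
      rw [norm_mul, Complex.norm_conj]
    have hdE : dist w₁ w₂ = ‖E‖ := by
      rw [dist_comm, Complex.dist_eq, ← hE]
    have hdh : dist (h (Finv w₁)) (h (Finv w₂)) = ‖h (Finv w₂) - h (Finv w₁)‖ := by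
      rw [dist_comm, Complex.dist_eq]
    rw [hdE, hdh]
    have hch := le_trans hkey habs
    rw [hc, div_le_iff₀ hk1'] at hch
    nlinarith [hch, hEabs]
  -- the set T and its openness
  set T : Set ℂ := {z | z ∈ Metric.ball (0:ℂ) 1 ∧ f z ∈ Metric.ball (f z₀) d} with hT
  have hTsub : T ⊆ Metric.ball (0:ℂ) 1 := fun z hz => hz.1
  have hTz₀ : z₀ ∈ T := ⟨hz₀, mem_ball_self hd⟩
  have hTinv : ∀ z ∈ T, Finv (f z) = z := fun z hz => finv_left z hz.1
  have hTopen : IsOpen T := by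
    rw [isOpen_iff_mem_nhds]
    intro z hz
    have hc : ContinuousAt f z := (hsf z hz.1).continuousAt
    have h1 : Metric.ball (0:ℂ) 1 ∈ 𝓝 z := isOpen_ball.mem_nhds hz.1
    have h2 : f ⁻¹' (Metric.ball (f z₀) d) ∈ 𝓝 z :=
      hc.preimage_mem_nhds (isOpen_ball.mem_nhds hz.2)
    filter_upwards [h1, h2] with y hy1 hy2
    exact ⟨hy1, hy2⟩
  have hTfinv : ∀ w ∈ Metric.ball (f z₀) d, Finv w ∈ T := by
    intro w hw
    have hwΩ : w ∈ Ω := hball hw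
    exact ⟨finv_mem w hwΩ, by rw [finv_right w hwΩ]; exact hw⟩
  -- covering claim
  set ρ : ℝ := d / (1 + k) with hρ
  have hρ0 : 0 < ρ := div_pos hd hk1'
  have hcover : Metric.ball (h z₀) ρ ⊆ h '' T := by
    have hAopen : IsOpen (Metric.ball (h z₀) ρ ∩ h '' T) := by
      rw [isOpen_iff_mem_nhds]
      rintro x ⟨hxS, ζ, hζT, rfl⟩
      have hζb : ζ ∈ Metric.ball (0:ℂ) 1 := hTsub hζT
      have hstr : HasStrictDerivAt h (deriv h ζ) ζ := analytic_hasStrictDerivAt hh hζb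
      have hmap : map h (𝓝 ζ) = 𝓝 (h ζ) := hstr.map_nhds_eq (hpos ζ hζb)
      have h1 : h '' T ∈ 𝓝 (h ζ) := by
        rw [← hmap, mem_map]
        exact Filter.mem_of_superset (hTopen.mem_nhds hζT) (fun y hy => ⟨y, hy, rfl⟩)
      exact Filter.inter_mem (isOpen_ball.mem_nhds hxS) h1
    have hAclosed : closure (Metric.ball (h z₀) ρ ∩ h '' T) ∩ Metric.ball (h z₀) ρ ⊆
        Metric.ball (h z₀) ρ ∩ h '' T := by
      rintro x ⟨hxc, hxS⟩
      obtain ⟨u, hu, hux⟩ := mem_closure_iff_seq_limit.mp hxc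
      have huT : ∀ n, u n ∈ h '' T := fun n => (hu n).2
      choose ζ hζT hζu using huT
      set ω : ℕ → ℂ := fun n => f (ζ n) with hω
      have hωball : ∀ n, ω n ∈ Metric.ball (f z₀) d := fun n => (hζT n).2
      have hωfin : ∀ n, Finv (ω n) = ζ n := fun n => hTinv _ (hζT n)
      have hcauchy_u : CauchySeq u := hux.cauchySeq
      have hcau : CauchySeq ω := by
        rw [Metric.cauchySeq_iff] at hcauchy_u ⊢
        intro ε hε
        obtain ⟨N, hN⟩ := hcauchy_u (ε / (1 + k)) (by positivity)
        refine ⟨N, fun m hm n hn => ?_⟩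
        have hcl := colip (ω m) (hωball m) (ω n) (hωball n)
        rw [hωfin, hωfin] at hcl
        have h2 : dist (h (ζ m)) (h (ζ n)) = dist (u m) (u n) := by rw [hζu, hζu]
        rw [h2] at hcl
        calc dist (ω m) (ω n) ≤ (1+k) * dist (u m) (u n) := hcl
          _ < (1+k) * (ε / (1+k)) := by
            exact mul_lt_mul_of_pos_left (hN m hm n hn) hk1'
          _ = ε := by field_simp
      obtain ⟨ω', hω'⟩ := cauchySeq_tendsto_of_complete hcau
      have hdist : ∀ n, dist (ω n) (f z₀) ≤ (1 + k) * dist (u n) (h z₀) := by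
        intro n
        have hcl := colip (ω n) (hωball n) (f z₀) (mem_ball_self hd)
        rw [hωfin, finv_left z₀ hz₀, hζu] at hcl
        exact hcl
      have hω'ball : ω' ∈ Metric.ball (f z₀) d := by
        rw [mem_ball]
        have hlim : Tendsto (fun n => dist (ω n) (f z₀)) atTop (𝓝 (dist ω' (f z₀))) :=
          hω'.dist tendsto_const_nhds
        have hlim2 : Tendsto (fun n => (1 + k) * dist (u n) (h z₀)) atTop
            (𝓝 ((1 + k) * dist x (h z₀))) := (hux.dist tendsto_const_nhds).const_mul _
        have hle := le_of_tendsto_of_tendsto' hlim hlim2 hdist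
        have h3 : (1 + k) * dist x (h z₀) < (1+k) * ρ :=
          mul_lt_mul_of_pos_left (mem_ball.mp hxS) hk1'
        have h4 : (1 + k) * ρ = d := by rw [hρ]; field_simp
        linarith
      have hω'Ω : ω' ∈ Ω := hball hω'ball
      have hζlim : Tendsto ζ atTop (𝓝 (Finv ω')) := by
        have hcont := (finv_loc ω' hω'Ω).1
        have htd := hcont.tendsto.comp hω'
        have hfeq : (Finv ∘ ω) = ζ := by funext n; exact hωfin n
        rwa [hfeq] at htd
      have hfino : Finv ω' ∈ T := hTfinv ω' hω'ball
      have hxeq : x = h (Finv ω') := by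
        have h5 : Tendsto (fun n => h (ζ n)) atTop (𝓝 (h (Finv ω'))) :=
          ((analytic_hasStrictDerivAt hh (hTsub hfino)).hasDerivAt.continuousAt.tendsto.comp hζlim)
        have h6 : Tendsto u atTop (𝓝 (h (Finv ω'))) := by
          have hfeq : (fun n => h (ζ n)) = u := by funext n; exact hζu n
          rwa [hfeq] at h5
        exact tendsto_nhds_unique hux h6
      exact ⟨hxS, Finv ω', hfino, hxeq.symm⟩
    have hpre : IsPreconnected (Metric.ball (h z₀) ρ) := (convex_ball (h z₀) ρ).isPreconnected
    intro x hxS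
    by_contra hxA
    have hxA' : x ∉ Metric.ball (h z₀) ρ ∩ h '' T := fun hc => hxA hc.2
    have hsub : Metric.ball (h z₀) ρ ⊆
        (Metric.ball (h z₀) ρ ∩ h '' T) ∪ (closure (Metric.ball (h z₀) ρ ∩ h '' T))ᶜ := by
      intro y hy
      by_cases hyc : y ∈ closure (Metric.ball (h z₀) ρ ∩ h '' T)
      · exact Or.inl (hAclosed ⟨hyc, hy⟩)
      · exact Or.inr hyc
    have hnon1 : (Metric.ball (h z₀) ρ ∩ (Metric.ball (h z₀) ρ ∩ h '' T)).Nonempty :=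
      ⟨h z₀, mem_ball_self hρ0, mem_ball_self hρ0, ⟨z₀, hTz₀, rfl⟩⟩
    have hnon2 : (Metric.ball (h z₀) ρ ∩ (closure (Metric.ball (h z₀) ρ ∩ h '' T))ᶜ).Nonempty := by
      refine ⟨x, hxS, ?_⟩
      intro hc
      exact hxA' (hAclosed ⟨hc, hxS⟩)
    obtain ⟨y, _, hy1, hy2⟩ := hpre _ _ hAopen (isClosed_closure.isOpen_compl) hsub hnon1 hnon2
    exact hy2 (subset_closure hy1)
  -- uniqueness
  have huniq : ∀ z ∈ T, ∀ z' ∈ T, h z = h z' → z = z' := by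
    intro z hz z' hz' he
    have h1 : f z ∈ Metric.ball (f z₀) d := hz.2
    have h2 : f z' ∈ Metric.ball (f z₀) d := hz'.2
    have := colip (f z) h1 (f z') h2
    rw [hTinv z hz, hTinv z' hz', he] at this
    simp only [dist_self, mul_zero] at this
    have heq : f z = f z' := by
      have h3 := le_antisymm this dist_nonneg
      exact dist_eq_zero.mp h3
    exact finj hz.1 hz'.1 heq
  -- the analytic right inverse Θ
  have hThetaEx : ∀ x ∈ Metric.ball (h z₀) ρ, ∃ z, z ∈ T ∧ h z = x := by
    intro x hx
    obtain ⟨z, hz, he⟩ := hcover hx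
    exact ⟨z, hz, he⟩
  classical
  set Θ : ℂ → ℂ := fun x => if hx : x ∈ Metric.ball (h z₀) ρ then (hThetaEx x hx).choose else z₀
    with hΘ
  have hΘT : ∀ x ∈ Metric.ball (h z₀) ρ, Θ x ∈ T ∧ h (Θ x) = x := by
    intro x hx
    rw [hΘ]
    simp only [hx, dif_pos]
    exact (hThetaEx x hx).choose_spec
  have hΘz₀ : Θ (h z₀) = z₀ := by
    have hc : h z₀ ∈ Metric.ball (h z₀) ρ := mem_ball_self hρ0
    have := hΘT (h z₀) hc
    exact huniq _ this.1 z₀ hTz₀ this.2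
  -- differentiability of Θ
  have hΘdiff : ∀ x ∈ Metric.ball (h z₀) ρ, HasDerivAt Θ ((deriv h (Θ x))⁻¹) x := by
    intro x hx
    have hT1 := hΘT x hx
    have hζb : Θ x ∈ Metric.ball (0:ℂ) 1 := hTsub hT1.1
    have hne := hpos _ hζb
    have hstr : HasStrictDerivAt h (deriv h (Θ x)) (Θ x) := analytic_hasStrictDerivAt hh hζb
    have hstr2 := hstr.hasStrictFDerivAt_equiv hne
    have hld : HasStrictDerivAt (hstr.localInverse h (deriv h (Θ x)) (Θ x) hne)
        (deriv h (Θ x))⁻¹ (h (Θ x)) := hstr.to_localInverse hne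
    have E2 : ∀ᶠ y in 𝓝 (h (Θ x)),
        h (hstr.localInverse h (deriv h (Θ x)) (Θ x) hne y) = y := hstr2.eventually_right_inverse
    have E3 : Tendsto (hstr.localInverse h (deriv h (Θ x)) (Θ x) hne)
        (𝓝 (h (Θ x))) (𝓝 (Θ x)) := hstr2.localInverse_tendsto
    have E4 : ∀ᶠ y in 𝓝 (h (Θ x)), hstr.localInverse h (deriv h (Θ x)) (Θ x) hne y ∈ T :=
      E3.eventually (hTopen.eventually_mem hT1.1)
    rw [hT1.2] at E2 E4 hld
    have E5 : ∀ᶠ y in 𝓝 x, y ∈ Metric.ball (h z₀) ρ := isOpen_ball.eventually_mem hx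
    have heq : ∀ᶠ y in 𝓝 x, Θ y = hstr.localInverse h (deriv h (Θ x)) (Θ x) hne y := by
      filter_upwards [E2, E4, E5] with y h2 h4 h5
      exact huniq _ (hΘT y h5).1 _ h4 (by rw [(hΘT y h5).2, h2])
    exact hld.hasDerivAt.congr_of_eventuallyEq heq
  -- Schwarz lemma application
  have hz₀abs : ‖z₀‖ < 1 := by
    have := mem_ball.mp hz₀
    simpa [Complex.dist_eq] using this
  have hr2pos : (0:ℝ) < 1 - ‖z₀‖ ^ 2 := by
    nlinarith [norm_nonneg z₀]
  set Mob : ℂ → ℂ := fun z => (z - z₀) / (1 - (starRingEnd ℂ) z₀ * z) with hMob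
  set q : ℂ → ℂ := fun x => Mob (Θ x) with hq
  have hΘabs : ∀ x ∈ Metric.ball (h z₀) ρ, ‖Θ x‖ < 1 := by
    intro x hx
    have := mem_ball.mp (hTsub (hΘT x hx).1)
    simpa [Complex.dist_eq] using this
  have hqdiff : DifferentiableOn ℂ q (Metric.ball (h z₀) ρ) := by
    intro x hx
    have h1 := hΘdiff x hx
    have hden := mobius_den_ne z₀ (Θ x) hz₀abs (hΘabs x hx)
    have hMd : DifferentiableAt ℂ Mob (Θ x) := by
      apply DifferentiableAt.div
      · exact differentiableAt_id.sub (differentiableAt_const z₀)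
      · exact (differentiableAt_const _).sub ((differentiableAt_const _).mul differentiableAt_id)
      · exact hden
    exact (hMd.comp x h1.differentiableAt).differentiableWithinAt
  have hq0 : q (h z₀) = 0 := by
    rw [hq]
    simp only [hΘz₀, hMob]
    simp
  have hqmaps : MapsTo q (Metric.ball (h z₀) ρ) (Metric.ball (q (h z₀)) 1) := by
    intro x hx
    have hmm := mobius_mem z₀ (Θ x) hz₀abs (hΘabs x hx)
    rw [hq0, mem_ball]
    simpa [hq, hMob, Complex.dist_eq] using hmm
  have hSchwarz := Complex.norm_deriv_le_div_of_mapsTo_ball hqdiff (hqmaps.mono_right ball_subset_closedBall) hρ0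
  have hqd : HasDerivAt q ((((1 - ‖z₀‖ ^ 2 : ℝ) : ℂ))⁻¹ * (deriv h z₀)⁻¹) (h z₀) := by
    have h1 : HasDerivAt Θ ((deriv h (Θ (h z₀)))⁻¹) (h z₀) := hΘdiff _ (mem_ball_self hρ0)
    rw [hΘz₀] at h1
    have h2 : HasDerivAt Mob ((((1 - ‖z₀‖ ^ 2 : ℝ) : ℂ))⁻¹) z₀ :=
      mobius_hasDerivAt z₀ hz₀abs
    exact HasDerivAt.comp_of_eq (h z₀) h2 h1 hΘz₀.symm
  rw [hqd.deriv] at hSchwarz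
  have habs2 : ‖(((1 - ‖z₀‖ ^ 2 : ℝ) : ℂ))⁻¹ * (deriv h z₀)⁻¹‖ =
      ((1 - ‖z₀‖ ^ 2) * ‖deriv h z₀‖)⁻¹ := by
    rw [norm_mul, norm_inv, norm_inv, Complex.norm_real, Real.norm_eq_abs, abs_of_pos hr2pos, mul_inv]
  rw [habs2] at hSchwarz
  have hXpos : (0:ℝ) < (1 - ‖z₀‖ ^ 2) * ‖deriv h z₀‖ :=
    mul_pos hr2pos (norm_pos_iff.mpr (hpos z₀ hz₀))
  have hρval : 1 / ρ = (1 + k) / d := by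
    rw [hρ, one_div_div]
  rw [hρval] at hSchwarz
  calc d = d * ((((1 - ‖z₀‖ ^ 2) * ‖deriv h z₀‖))⁻¹ *
        ((1 - ‖z₀‖ ^ 2) * ‖deriv h z₀‖)) := by
        rw [inv_mul_cancel₀ (ne_of_gt hXpos), mul_one]
    _ ≤ d * (((1 + k) / d) * ((1 - ‖z₀‖ ^ 2) * ‖deriv h z₀‖)) := by
        apply mul_le_mul_of_nonneg_left _ hd.le
        exact mul_le_mul_of_nonneg_right hSchwarz hXpos.le
    _ = (1 + k) * ((1 - ‖z₀‖ ^ 2) * ‖deriv h z₀‖) := by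
        field_simp


theorem stmt_14 (K : ℝ) (hK : 1 ≤ K) (h g f : ℂ → ℂ)
    (hh : AnalyticOnNhd ℂ h (Metric.ball (0:ℂ) 1)) (hg : AnalyticOnNhd ℂ g (Metric.ball (0:ℂ) 1))
    (hf : ∀ z, f z = h z + (starRingEnd ℂ) (g z))
    (finj : Set.InjOn f (Metric.ball (0:ℂ) 1))
    (fsp : ∀ z ∈ Metric.ball (0:ℂ) 1, ‖deriv g z‖ < ‖deriv h z‖)
    (hqc : ∀ z ∈ Metric.ball (0:ℂ) 1,
      ‖deriv h z‖ + ‖deriv g z‖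
        ≤ K * (‖deriv h z‖ - ‖deriv g z‖))
    (hne : f '' Metric.ball (0:ℂ) 1 ≠ Set.univ) :
    ∀ z ∈ Metric.ball (0:ℂ) 1,
      (‖deriv h (z)‖ + ‖deriv g (z)‖) ≥ ((1+K)/(2*K)) * Metric.infDist (f z) ((f '' Metric.ball (0:ℂ) 1)ᶜ) / (1 - ‖z‖ ^ 2) := by
  intro z hz
  have hzabs : ‖z‖ < 1 := by
    have := mem_ball.mp hz
    simpa [Complex.dist_eq] using this
  have hr2pos : (0:ℝ) < 1 - ‖z‖ ^ 2 := by
    nlinarith [norm_nonneg z]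
  have hK0 : (0:ℝ) < K := lt_of_lt_of_le one_pos hK
  set d := Metric.infDist (f z) ((f '' Metric.ball (0:ℂ) 1)ᶜ) with hdd
  have hd0 : 0 ≤ d := Metric.infDist_nonneg
  rcases eq_or_lt_of_le hd0 with heq | hdpos
  · rw [← heq]
    rw [mul_zero, zero_div]
    positivity
  · set k := (K - 1)/(K + 1) with hk
    have hk0 : 0 ≤ k := div_nonneg (by linarith) (by linarith)
    have hk1 : k < 1 := by rw [hk, div_lt_one (by linarith)]; linarith
    have hkb : ∀ z' ∈ Metric.ball (0:ℂ) 1,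
        ‖deriv g z'‖ ≤ k * ‖deriv h z'‖ := by
      intro z' hz'
      have h1 := hqc z' hz'
      rw [hk, div_mul_eq_mul_div, le_div_iff₀ (by linarith : (0:ℝ) < K + 1)]
      nlinarith
    have hpos : ∀ z' ∈ Metric.ball (0:ℂ) 1, deriv h z' ≠ 0 := by
      intro z' hz' hc
      have h1 := fsp z' hz'
      rw [hc] at h1
      simp only [norm_zero] at h1
      exact absurd h1 (not_lt.mpr (norm_nonneg _))
    have hball : Metric.ball (f z) d ⊆ f '' Metric.ball (0:ℂ) 1 := by
      intro w hw
      by_contra hwc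
      have h1 : d ≤ dist (f z) w := Metric.infDist_le_dist_of_mem hwc
      rw [mem_ball, dist_comm] at hw
      linarith
    have hcore := qc_core k hk0 hk1 h g f hh hg hf finj hkb hpos hz hdpos hball
    have h1k : 1 + k = 2*K/(K+1) := by rw [hk]; field_simp; ring
    rw [ge_iff_le, div_le_iff₀ hr2pos]
    have hcpos : (0:ℝ) ≤ (1+K)/(2*K) := by positivity
    calc (1+K)/(2*K) * d
        ≤ (1+K)/(2*K) * ((1 + k) * ((1 - ‖z‖ ^ 2) * ‖deriv h z‖)) := by
          exact mul_le_mul_of_nonneg_left hcore hcpos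
      _ = (1 - ‖z‖ ^ 2) * ‖deriv h z‖ := by
          rw [h1k]; field_simp; ring
      _ ≤ (‖deriv h z‖ + ‖deriv g z‖) * (1 - ‖z‖ ^ 2) := by
          nlinarith [norm_nonneg (deriv g z)]

end
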